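/- arXiv:2506.24053 — 13 statements merged into one kernel-verified Lean document; each statement's English description precedes it below -/
import Mathlib

section
/- Let S = {s₁,…,sₙ} be a set of distinct positive integers and F = {f₁,…,f_l} a factor-closed set containing S. Define the n×l matrix E by E_{ik} = 1 if f_k divides s_i and 0 otherwise. Then for all indices i, j, the (i,j) entry of the matrix ∑_{k=1}^{l} φ(f_k) E_k E_kᵀ (where E_k is the k-th column of E) equals gcd(s_i, s_j). -/
theorem gcd_matrix_cp_decomposition (n l : ℕ) (s : Fin n → ℕ) (f : Fin l → ℕ)
    (hs : ∀ i, 0 < s i) (hsinj : Function.Injective s)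
    (hf : ∀ k, 0 < f k) (hfinj : Function.Injective f)
    (hsub : ∀ i, ∃ k, f k = s i)
    (hfc : ∀ k d, 0 < d → d ∣ f k → ∃ k', f k' = d)
    (E : Matrix (Fin n) (Fin l) ℝ)
    (hE : ∀ i k, E i k = if f k ∣ s i then 1 else 0) :
    ∀ i j, ∑ k, (Nat.totient (f k) : ℝ) * (E i k * E j k)
      = (Nat.gcd (s i) (s j) : ℝ) := by
  intro i j
  have hgpos : 0 < Nat.gcd (s i) (s j) := Nat.gcd_pos_of_pos_left _ (hs i)
  have key : ∑ k, (Nat.totient (f k) : ℝ) * (E i k * E j k)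
      = ∑ k ∈ Finset.univ.filter (fun k => f k ∣ Nat.gcd (s i) (s j)),
          (Nat.totient (f k) : ℝ) := by
    rw [Finset.sum_filter]
    apply Finset.sum_congr rfl
    intro k _
    rw [hE, hE]
    by_cases h1 : f k ∣ s i <;> by_cases h2 : f k ∣ s j <;>
      simp [h1, h2, Nat.dvd_gcd_iff]
  rw [key]
  have himg2 : ∑ k ∈ Finset.univ.filter (fun k => f k ∣ Nat.gcd (s i) (s j)),
      (Nat.totient (f k) : ℝ)
      = ∑ d ∈ (Finset.univ.filter (fun k => f k ∣ Nat.gcd (s i) (s j))).image f,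
          (Nat.totient d : ℝ) :=
    (Finset.sum_image (g := f) (f := fun d : ℕ => (Nat.totient d : ℝ)) (by intro x _ y _ h; exact hfinj h)).symm
  rw [himg2]
  have himg : (Finset.univ.filter (fun k => f k ∣ Nat.gcd (s i) (s j))).image f
      = (Nat.gcd (s i) (s j)).divisors := by
    ext d
    simp only [Finset.mem_image, Finset.mem_filter, Finset.mem_univ, true_and,
      Nat.mem_divisors]
    constructor
    · rintro ⟨k, hk, rfl⟩; exact ⟨hk, hgpos.ne'⟩
    · rintro ⟨hd, -⟩
      obtain ⟨k0, hk0⟩ := hsub i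
      obtain ⟨k, hk⟩ := hfc k0 d (Nat.pos_of_dvd_of_pos hd hgpos)
        (hk0 ▸ hd.trans (Nat.gcd_dvd_left _ _))
      exact ⟨k, hk ▸ hd, hk⟩
  rw [himg, ← Nat.cast_sum, Nat.sum_totient]
end

section
/- Let S = {s₁,…,sₙ} be any set of n distinct positive integers. Then the n×n GCD matrix T with T_{ij} = gcd(s_i, s_j) is positive definite. -/
theorem gcd_matrix_posDef (n : ℕ) (s : Fin n → ℕ)
    (hs : ∀ i, 0 < s i) (hsinj : Function.Injective s) :
    (Matrix.of fun i j : Fin n => (Nat.gcd (s i) (s j) : ℝ)).PosDef := by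
  set M := Finset.univ.sup s with hM
  have hmem : ∀ i, s i ∈ Finset.Icc 1 M := fun i =>
    Finset.mem_Icc.2 ⟨hs i, Finset.le_sup (Finset.mem_univ i)⟩
  -- key identity
  have key : ∀ i j, ((Nat.gcd (s i) (s j) : ℝ)) =
      ∑ d ∈ Finset.Icc 1 M,
        (Nat.totient d : ℝ) * ((if d ∣ s i then (1:ℝ) else 0) * (if d ∣ s j then (1:ℝ) else 0)) := by
    intro i j
    have hg : Nat.gcd (s i) (s j) ≠ 0 := Nat.gcd_ne_zero_left (hs i).ne'
    have hnat : ∑ d ∈ Finset.Icc 1 M, (if d ∣ Nat.gcd (s i) (s j) then Nat.totient d else 0)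
        = Nat.gcd (s i) (s j) := by
      rw [← Finset.sum_filter]
      rw [show (Finset.Icc 1 M).filter (· ∣ Nat.gcd (s i) (s j)) = (Nat.gcd (s i) (s j)).divisors by
        ext d
        simp only [Finset.mem_filter, Finset.mem_Icc, Nat.mem_divisors]
        constructor
        · rintro ⟨⟨h1, h2⟩, hd⟩; exact ⟨hd, hg⟩
        · rintro ⟨hd, -⟩
          refine ⟨⟨Nat.pos_of_dvd_of_pos hd (Nat.pos_of_ne_zero hg), ?_⟩, hd⟩
          exact le_trans (Nat.le_of_dvd (Nat.pos_of_ne_zero hg) hd)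
            (le_trans (Nat.gcd_le_left _ (hs i)) (Finset.le_sup (Finset.mem_univ i)))]
      exact Nat.sum_totient _
    calc ((Nat.gcd (s i) (s j) : ℝ))
        = ((∑ d ∈ Finset.Icc 1 M, (if d ∣ Nat.gcd (s i) (s j) then Nat.totient d else 0) : ℕ) : ℝ) := by
          rw [hnat]
      _ = ∑ d ∈ Finset.Icc 1 M,
            (Nat.totient d : ℝ) * ((if d ∣ s i then (1:ℝ) else 0) * (if d ∣ s j then (1:ℝ) else 0)) := by
          push_cast
          refine Finset.sum_congr rfl fun d _ => ?_
          have : d ∣ Nat.gcd (s i) (s j) ↔ d ∣ s i ∧ d ∣ s j := Nat.dvd_gcd_iff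
          split_ifs with h h1 h2 h1 h2 <;>
            simp_all <;> ring
  refine Matrix.posDef_iff_dotProduct_mulVec.mpr ⟨?_, ?_⟩
  · ext i j
    simp [Matrix.conjTranspose_apply, Nat.gcd_comm]
  · intro x hx
    have expand : dotProduct (star x)
        (Matrix.mulVec (Matrix.of fun i j : Fin n => (Nat.gcd (s i) (s j) : ℝ)) x)
        = ∑ d ∈ Finset.Icc 1 M, (Nat.totient d : ℝ) *
            (∑ i, (if d ∣ s i then x i else 0))^2 := by
      simp only [dotProduct, Matrix.mulVec, Matrix.of_apply, star_trivial, Pi.star_apply,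
        RCLike.star_def]
      calc ∑ i, x i * ∑ j, (Nat.gcd (s i) (s j) : ℝ) * x j
          = ∑ i, ∑ j, ∑ d ∈ Finset.Icc 1 M, (Nat.totient d : ℝ) *
              ((if d ∣ s i then x i else 0) * (if d ∣ s j then x j else 0)) := by
            refine Finset.sum_congr rfl fun i _ => ?_
            rw [Finset.mul_sum]
            refine Finset.sum_congr rfl fun j _ => ?_
            rw [key i j, Finset.sum_mul, Finset.mul_sum]
            refine Finset.sum_congr rfl fun d _ => ?_
            split_ifs <;> ring
        _ = ∑ d ∈ Finset.Icc 1 M, (Nat.totient d : ℝ) *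
              (∑ i, (if d ∣ s i then x i else 0))^2 := by
            rw [show (∑ i, ∑ j, ∑ d ∈ Finset.Icc 1 M, (Nat.totient d : ℝ) *
                ((if d ∣ s i then x i else 0) * (if d ∣ s j then x j else 0)))
                = ∑ d ∈ Finset.Icc 1 M, ∑ i, ∑ j, (Nat.totient d : ℝ) *
                ((if d ∣ s i then x i else 0) * (if d ∣ s j then x j else 0)) by
              rw [Finset.sum_congr rfl fun i _ => Finset.sum_comm, Finset.sum_comm]]
            refine Finset.sum_congr rfl fun d _ => ?_
            rw [sq, Finset.sum_mul_sum]
            simp only [Finset.mul_sum]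
    rw [expand]
    -- choose maximal element of support
    have hsupp : (Finset.univ.filter (fun i => x i ≠ 0)).Nonempty := by
      by_contra h
      apply hx
      funext i
      by_contra hxi
      exact h ⟨i, Finset.mem_filter.2 ⟨Finset.mem_univ i, hxi⟩⟩
    obtain ⟨i₀, hi₀mem, hi₀max⟩ :=
      (Finset.univ.filter (fun i => x i ≠ 0)).exists_max_image s hsupp
    have hx₀ : x i₀ ≠ 0 := (Finset.mem_filter.1 hi₀mem).2
    apply Finset.sum_pos'
    · intro d _
      positivity
    · refine ⟨s i₀, hmem i₀, ?_⟩
      have hf : (∑ i, (if s i₀ ∣ s i then x i else 0)) = x i₀ := by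
        rw [Finset.sum_eq_single i₀]
        · simp
        · intro j _ hj
          split_ifs with hdvd
          · by_contra hxj
            have hjmem : j ∈ Finset.univ.filter (fun i => x i ≠ 0) :=
              Finset.mem_filter.2 ⟨Finset.mem_univ j, hxj⟩
            have h1 : s j ≤ s i₀ := hi₀max j hjmem
            have h2 : s i₀ ≤ s j := Nat.le_of_dvd (hs j) hdvd
            exact hj (hsinj (le_antisymm h2 h1).symm)
          · rfl
        · intro h; exact absurd (Finset.mem_univ i₀) h
      rw [hf]
      have : 0 < Nat.totient (s i₀) := Nat.totient_pos.2 (hs i₀)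
      positivity
end

section
/- Let S = {s₁,…,sₙ} be a factor-closed set of distinct positive integers. Then the determinant of the GCD matrix T with T_{ij} = gcd(s_i, s_j) equals ∏_{i=1}^{n} φ(s_i). -/
theorem gcd_matrix_det_factor_closed (n : ℕ) (s : Fin n → ℕ)
    (hs : ∀ i, 0 < s i) (hsinj : Function.Injective s)
    (hfc : ∀ i d, 0 < d → d ∣ s i → ∃ j, s j = d) :
    (Matrix.of fun i j : Fin n => (Nat.gcd (s i) (s j) : ℝ)).det
      = ∏ i, (Nat.totient (s i) : ℝ) := by
  set A : Matrix (Fin n) (Fin n) ℝ :=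
    Matrix.of (fun i k => if s k ∣ s i then (1:ℝ) else 0) with hA
  have hdecomp : (Matrix.of fun i j : Fin n => (Nat.gcd (s i) (s j) : ℝ))
      = A * Matrix.diagonal (fun k => (Nat.totient (s k) : ℝ)) * A.transpose := by
    ext i j
    rw [Matrix.mul_apply]
    have : ∀ k, (A * Matrix.diagonal (fun k => (Nat.totient (s k) : ℝ))) i k * A.transpose k j
        = if s k ∣ Nat.gcd (s i) (s j) then (Nat.totient (s k) : ℝ) else 0 := by
      intro k
      rw [Matrix.mul_diagonal, Matrix.transpose_apply, hA]
      simp only [Matrix.of_apply, Nat.dvd_gcd_iff]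
      by_cases h1 : s k ∣ s i <;> by_cases h2 : s k ∣ s j <;> simp [h1, h2]
    rw [Finset.sum_congr rfl (fun k _ => this k)]
    rw [← Finset.sum_filter]
    have hbij : ∑ k ∈ Finset.univ.filter (fun k => s k ∣ Nat.gcd (s i) (s j)),
        (Nat.totient (s k) : ℝ) = ∑ d ∈ (Nat.gcd (s i) (s j)).divisors, (Nat.totient d : ℝ) := by
      apply Finset.sum_nbij (i := fun k => s k)
      · intro k hk
        simp only [Finset.mem_filter, Finset.mem_univ, true_and] at hk
        exact Nat.mem_divisors.mpr ⟨hk, Nat.gcd_ne_zero_left (hs i).ne'⟩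
      · intro a ha b hb hab
        exact hsinj hab
      · intro d hd
        rw [Finset.mem_coe, Nat.mem_divisors] at hd
        have hdpos : 0 < d := Nat.pos_of_dvd_of_pos hd.1 (Nat.pos_of_ne_zero hd.2)
        obtain ⟨j', hj'⟩ := hfc i d hdpos (hd.1.trans (Nat.gcd_dvd_left _ _))
        refine (Set.mem_image _ _ _).mpr ⟨j', ?_, hj'⟩
        simp only [Finset.coe_filter, Set.mem_setOf_eq, Finset.mem_univ, true_and]
        rw [hj']; exact hd.1
      · intros; rfl
    rw [hbij, Matrix.of_apply, ← Nat.cast_sum]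
    rw [Nat.sum_totient]
  have hAdet : A.det = 1 := by
    let σ := Tuple.sort s
    have hs' : StrictMono (s ∘ σ) :=
      (Tuple.monotone_sort s).strictMono_of_injective (hsinj.comp σ.injective)
    rw [← Matrix.det_submatrix_equiv_self σ A]
    have htri : (A.submatrix σ σ).BlockTriangular OrderDual.toDual := by
      intro i j hij
      have hij' : (i:Fin n) < j := hij
      simp only [Matrix.submatrix_apply, hA, Matrix.of_apply]
      rw [if_neg]
      intro hdvd
      exact absurd (Nat.le_of_dvd (hs _) hdvd) (not_le.mpr (hs' hij'))
    rw [Matrix.det_of_lowerTriangular _ htri]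
    apply Finset.prod_eq_one
    intro i _
    simp [hA]
  rw [hdecomp, Matrix.det_mul, Matrix.det_mul, Matrix.det_transpose, hAdet,
    Matrix.det_diagonal]
  ring
end

section
/- For the set S = {1, 2, …, n}, the determinant of the n×n matrix with (i,j) entry gcd(i,j) equals φ(1)·φ(2)⋯φ(n). -/
theorem smith_determinant (n : ℕ) :
    (Matrix.of fun i j : Fin n => (Nat.gcd (i.val + 1) (j.val + 1) : ℝ)).det
      = ∏ i : Fin n, (Nat.totient (i.val + 1) : ℝ) := by
  set A : Matrix (Fin n) (Fin n) ℝ :=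
    Matrix.of fun i d => if (d.val + 1) ∣ (i.val + 1) then 1 else 0 with hA
  set D : Matrix (Fin n) (Fin n) ℝ :=
    Matrix.diagonal fun d => (Nat.totient (d.val + 1) : ℝ) with hD
  have key : (Matrix.of fun i j : Fin n => (Nat.gcd (i.val + 1) (j.val + 1) : ℝ))
      = A * D * A.transpose := by
    ext i j
    simp only [Matrix.mul_apply, Matrix.transpose_apply, Matrix.diagonal, Matrix.of_apply, hA, hD]
    have : ∀ k : Fin n,
        (∑ d : Fin n, (if (d.val + 1) ∣ (i.val + 1) then (1:ℝ) else 0) *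
          (if d = k then (Nat.totient (d.val + 1) : ℝ) else 0)) =
        (if (k.val + 1) ∣ (i.val + 1) then (Nat.totient (k.val + 1) : ℝ) else 0) := by
      intro k
      rw [Finset.sum_eq_single k]
      · by_cases h : (k.val + 1) ∣ (i.val + 1) <;> simp [h]
      · intro b _ hb; simp [hb]
      · simp
    rw [Finset.sum_congr rfl (fun k _ => by
      rw [show (∑ j_1 : Fin n, (if (j_1.val + 1) ∣ (i.val + 1) then (1:ℝ) else 0) *
          (if j_1 = k then (Nat.totient (j_1.val + 1) : ℝ) else 0)) =
        (if (k.val + 1) ∣ (i.val + 1) then (Nat.totient (k.val + 1) : ℝ) else 0) from this k])]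
    -- now goal: gcd = ∑ k, (if k+1 ∣ i+1 then φ(k+1) else 0) * (if k+1 ∣ j+1 then 1 else 0)
    have hsum : (∑ k : Fin n,
        (if (k.val + 1) ∣ (i.val + 1) then (Nat.totient (k.val + 1) : ℝ) else 0) *
        (if (k.val + 1) ∣ (j.val + 1) then (1:ℝ) else 0))
        = ∑ k ∈ Finset.univ.filter
            (fun k : Fin n => (k.val + 1) ∣ (i.val + 1) ∧ (k.val + 1) ∣ (j.val + 1)),
            (Nat.totient (k.val + 1) : ℝ) := by
      rw [Finset.sum_filter]
      refine Finset.sum_congr rfl fun k _ => ?_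
      by_cases h1 : (k.val + 1) ∣ (i.val + 1) <;> by_cases h2 : (k.val + 1) ∣ (j.val + 1) <;>
        simp [h1, h2]
    rw [hsum]
    have hbij : (∑ k ∈ Finset.univ.filter
            (fun k : Fin n => (k.val + 1) ∣ (i.val + 1) ∧ (k.val + 1) ∣ (j.val + 1)),
            (Nat.totient (k.val + 1) : ℝ))
        = ∑ d ∈ (Nat.gcd (i.val + 1) (j.val + 1)).divisors, (Nat.totient d : ℝ) := by
      refine Finset.sum_bij (fun k _ => k.val + 1) ?_ ?_ ?_ ?_
      · intro k hk
        simp only [Finset.mem_filter, Finset.mem_univ, true_and] at hk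
        rw [Nat.mem_divisors]
        exact ⟨Nat.dvd_gcd hk.1 hk.2, Nat.gcd_ne_zero_left (by omega)⟩
      · intro a _ b _ h
        exact Fin.ext (by omega)
      · intro d hd
        rw [Nat.mem_divisors] at hd
        have hd0 : 0 < d := Nat.pos_of_dvd_of_pos hd.1 (Nat.pos_of_ne_zero hd.2)
        have hle : d ≤ i.val + 1 :=
          Nat.le_of_dvd (Nat.succ_pos _) (hd.1.trans (Nat.gcd_dvd_left _ _))
        have hlt : d - 1 < n := by omega
        refine ⟨⟨d - 1, hlt⟩, ?_, by simp only; omega⟩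
        simp only [Finset.mem_filter, Finset.mem_univ, true_and]
        have : d - 1 + 1 = d := by omega
        rw [this]
        exact ⟨hd.1.trans (Nat.gcd_dvd_left _ _), hd.1.trans (Nat.gcd_dvd_right _ _)⟩
      · intro k _
        rfl
    rw [hbij, ← Nat.cast_sum, Nat.sum_totient]
  rw [key, Matrix.det_mul, Matrix.det_mul, Matrix.det_transpose]
  have hdetA : A.det = 1 := by
    rw [Matrix.det_of_lowerTriangular A]
    · refine Finset.prod_eq_one fun i _ => ?_
      simp [hA]
    · intro i j hij
      have hij' : i < j := hij
      simp only [hA, Matrix.of_apply, ite_eq_right_iff]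
      intro hdvd
      have := Nat.le_of_dvd (Nat.succ_pos _) hdvd
      have : (j : ℕ) < i := by omega
      exact absurd hij' (by omega)
  rw [hdetA, hD, Matrix.det_diagonal]
  simp
end

section
/- Let S = {s₁,…,sₙ} be a factor-closed set of distinct positive integers, and let g : ℕ → ℝ be a function such that (g * μ)(k) > 0 for all positive integers k, where μ is the Möbius function and * is Dirichlet convolution. Then the determinant of the n×n matrix with (i,j) entry g(gcd(s_i, s_j)) equals ∏_{i=1}^{n} (g * μ)(s_i). -/
open ArithmeticFunction ArithmeticFunction.Moebius Finset in
private lemma Ffun_inv (g : ℕ → ℝ) (m : ℕ) (hm : 0 < m) :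
    ∑ d ∈ m.divisors, (∑ e ∈ d.divisors, g e * (μ (d / e) : ℝ)) = g m := by
  refine (ArithmeticFunction.sum_eq_iff_sum_smul_moebius_eq
    (f := fun d => ∑ e ∈ d.divisors, g e * (μ (d / e) : ℝ)) (g := g)).mpr ?_ m hm
  intro k hk
  rw [Nat.sum_divisorsAntidiagonal' (f := fun x y => (μ x : ℤ) • g y)]
  refine Finset.sum_congr rfl fun d hd => ?_
  rw [zsmul_eq_mul, mul_comm]

open ArithmeticFunction ArithmeticFunction.Moebius in
theorem meet_matrix_det_factor_closed (n : ℕ) (s : Fin n → ℕ) (g : ℕ → ℝ)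
    (hs : ∀ i, 0 < s i) (hsinj : Function.Injective s)
    (hfc : ∀ i d, 0 < d → d ∣ s i → ∃ j, s j = d)
    (hpos : ∀ k : ℕ, 0 < k → 0 < ∑ d ∈ k.divisors, g d * (μ (k / d) : ℝ)) :
    (Matrix.of fun i j : Fin n => g (Nat.gcd (s i) (s j))).det
      = ∏ i, ∑ d ∈ (s i).divisors, g d * (μ ((s i) / d) : ℝ) := by
  classical
  set F : ℕ → ℝ := fun k => ∑ d ∈ k.divisors, g d * (μ (k / d) : ℝ) with hF
  set A : Matrix (Fin n) (Fin n) ℝ :=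
    Matrix.of (fun i j : Fin n => if s j ∣ s i then (1 : ℝ) else 0) with hA
  have key : (Matrix.of fun i j : Fin n => g (Nat.gcd (s i) (s j)))
      = A * Matrix.diagonal (fun k => F (s k)) * A.transpose := by
    ext i j
    rw [Matrix.mul_apply]
    simp only [Matrix.mul_diagonal, Matrix.transpose_apply, Matrix.of_apply, hA]
    have heq : ∀ k : Fin n, (if s k ∣ s i then (1:ℝ) else 0) * F (s k) *
        (if s k ∣ s j then (1:ℝ) else 0)
        = if s k ∣ Nat.gcd (s i) (s j) then F (s k) else 0 := by
      intro k
      by_cases h1 : s k ∣ s i <;> by_cases h2 : s k ∣ s j <;>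
        simp [h1, h2, Nat.dvd_gcd_iff]
    rw [Finset.sum_congr rfl fun k _ => heq k, ← Finset.sum_filter]
    symm
    have hgcd : 0 < Nat.gcd (s i) (s j) := Nat.gcd_pos_of_pos_left _ (hs i)
    have himage : (Finset.univ.filter (fun k => s k ∣ Nat.gcd (s i) (s j))).image s
        = (Nat.gcd (s i) (s j)).divisors := by
      ext d
      simp only [Finset.mem_image, Finset.mem_filter, Finset.mem_univ, true_and,
        Nat.mem_divisors]
      constructor
      · rintro ⟨k, hk, rfl⟩; exact ⟨hk, hgcd.ne'⟩
      · rintro ⟨hd, -⟩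
        have hdpos : 0 < d := Nat.pos_of_dvd_of_pos hd hgcd
        obtain ⟨k, hk⟩ := hfc i d hdpos (hd.trans (Nat.gcd_dvd_left _ _))
        exact ⟨k, hk ▸ hd, hk⟩
    calc ∑ k ∈ Finset.univ.filter (fun k => s k ∣ Nat.gcd (s i) (s j)), F (s k)
        = ∑ d ∈ (Finset.univ.filter (fun k => s k ∣ Nat.gcd (s i) (s j))).image s, F d := by
          rw [Finset.sum_image (fun a _ b _ h => hsinj h)]
      _ = ∑ d ∈ (Nat.gcd (s i) (s j)).divisors, F d := by rw [himage]
      _ = g (Nat.gcd (s i) (s j)) := Ffun_inv g _ hgcd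
  rw [key, Matrix.det_mul, Matrix.det_mul, Matrix.det_diagonal, Matrix.det_transpose]
  have hdetA : A.det = 1 := by
    set perm := Tuple.sort s with hperm
    have hmono : StrictMono (s ∘ perm) :=
      (Tuple.monotone_sort s).strictMono_of_injective (hsinj.comp perm.injective)
    have hsub : (A.submatrix perm perm).det = A.det := Matrix.det_submatrix_equiv_self perm A
    rw [← hsub, Matrix.det_of_lowerTriangular]
    · simp [hA, Matrix.submatrix_apply]
    · intro i j hij
      have hij' : (i : Fin n) < j := hij
      have : s (perm i) < s (perm j) := hmono hij'
      simp only [hA, Matrix.submatrix_apply, Matrix.of_apply, ite_eq_right_iff]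
      intro hdvd
      exact absurd (Nat.le_of_dvd (hs _) hdvd) (not_le.mpr this)
  rw [hdetA, one_mul, mul_one]
end

section
/- Let S = {s₁,…,sₙ} be distinct positive integers and g : ℕ → ℝ a function with (g * μ)(k) > 0 for all positive integers k, where μ is the Möbius function. Then the n×n matrix with entries g(gcd(s_i, s_j)) is positive definite. -/
open ArithmeticFunction ArithmeticFunction.Moebius in
theorem g_gcd_matrix_posDef (n : ℕ) (s : Fin n → ℕ) (g : ℕ → ℝ)
    (hs : ∀ i, 0 < s i) (hsinj : Function.Injective s)
    (hpos : ∀ k : ℕ, 0 < k → 0 < ∑ d ∈ k.divisors, g d * (μ (k / d) : ℝ)) :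
    (Matrix.of fun i j : Fin n => g (Nat.gcd (s i) (s j))).PosDef := by
  classical
  set f : ℕ → ℝ := fun d => ∑ e ∈ d.divisors, g e * (μ (d / e) : ℝ) with hf
  have hfpos : ∀ d : ℕ, 0 < d → 0 < f d := fun d hd => hpos d hd
  -- Möbius inversion: g k = ∑_{d ∣ k} f d
  have hinv : ∀ k : ℕ, 0 < k → ∑ d ∈ k.divisors, f d = g k := by
    refine (ArithmeticFunction.sum_eq_iff_sum_mul_moebius_eq (f := f) (g := g)).mpr ?_
    intro k hk
    rw [Nat.sum_divisorsAntidiagonal' (f := fun a b => (μ a : ℝ) * g b)]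
    simp only [hf]
    exact Finset.sum_congr rfl fun d _ => mul_comm _ _
  set B : ℕ := Finset.univ.sup s with hB
  have hsB : ∀ i, s i ≤ B := fun i => Finset.le_sup (Finset.mem_univ i)
  -- divisors of gcd as a filter of Icc 1 B
  have hdiv : ∀ i j : Fin n, (Nat.gcd (s i) (s j)).divisors
      = (Finset.Icc 1 B).filter (fun d => d ∣ s i ∧ d ∣ s j) := by
    intro i j
    ext d
    simp only [Nat.mem_divisors, Finset.mem_filter, Finset.mem_Icc, Nat.dvd_gcd_iff]
    constructor
    · rintro ⟨⟨h1, h2⟩, hne⟩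
      have hd0 : 0 < d := Nat.pos_of_dvd_of_pos h1 (hs i)
      exact ⟨⟨hd0, le_trans (Nat.le_of_dvd (hs i) h1) (hsB i)⟩, h1, h2⟩
    · rintro ⟨_, h1, h2⟩
      exact ⟨⟨h1, h2⟩, Nat.gcd_ne_zero_left (hs i).ne'⟩
  rw [Matrix.posDef_iff_dotProduct_mulVec]
  constructor
  · ext i j
    simp [Matrix.conjTranspose_apply, Nat.gcd_comm]
  · intro x hx
    have key : dotProduct (star x) ((Matrix.of fun i j : Fin n => g (Nat.gcd (s i) (s j))).mulVec x)
        = ∑ d ∈ Finset.Icc 1 B, f d * (∑ i ∈ Finset.univ.filter (fun i => d ∣ s i), x i) ^ 2 := by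
      simp only [dotProduct, Matrix.mulVec, dotProduct, Pi.star_apply,
        Matrix.of_apply, star_trivial]
      have hg : ∀ i j : Fin n, g (Nat.gcd (s i) (s j))
          = ∑ d ∈ Finset.Icc 1 B, if d ∣ s i ∧ d ∣ s j then f d else 0 := by
        intro i j
        rw [← hinv _ (Nat.gcd_pos_of_pos_left _ (hs i)), hdiv i j, Finset.sum_filter]
      calc ∑ i, x i * ∑ j, g (Nat.gcd (s i) (s j)) * x j
          = ∑ i, ∑ j, ∑ d ∈ Finset.Icc 1 B,
              (if d ∣ s i then x i else 0) * (if d ∣ s j then x j else 0) * f d := by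
            refine Finset.sum_congr rfl fun i _ => ?_
            rw [Finset.mul_sum]
            refine Finset.sum_congr rfl fun j _ => ?_
            rw [hg i j, Finset.sum_mul, Finset.mul_sum]
            refine Finset.sum_congr rfl fun d _ => ?_
            by_cases h1 : d ∣ s i <;> by_cases h2 : d ∣ s j <;> simp [h1, h2] <;> ring
        _ = ∑ i, ∑ d ∈ Finset.Icc 1 B, ∑ j,
              (if d ∣ s i then x i else 0) * (if d ∣ s j then x j else 0) * f d :=
            Finset.sum_congr rfl fun i _ => Finset.sum_comm
        _ = ∑ d ∈ Finset.Icc 1 B, ∑ i, ∑ j,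
              (if d ∣ s i then x i else 0) * (if d ∣ s j then x j else 0) * f d :=
            Finset.sum_comm
        _ = ∑ d ∈ Finset.Icc 1 B, f d *
              (∑ i ∈ Finset.univ.filter (fun i => d ∣ s i), x i) ^ 2 := by
            refine Finset.sum_congr rfl fun d _ => ?_
            rw [Finset.sum_filter, sq, Finset.sum_mul_sum, Finset.mul_sum]
            refine Finset.sum_congr rfl fun i _ => ?_
            rw [Finset.mul_sum]
            refine Finset.sum_congr rfl fun j _ => ?_
            ring
    rw [key]
    -- find an index with x i ≠ 0 maximizing s i
    have hne : (Finset.univ.filter (fun i => x i ≠ 0)).Nonempty := by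
      by_contra h
      apply hx
      funext i
      by_contra hxi
      exact h ⟨i, Finset.mem_filter.mpr ⟨Finset.mem_univ i, hxi⟩⟩
    obtain ⟨i₀, hi₀mem, hi₀max⟩ := Finset.exists_max_image _ s hne
    have hxi₀ : x i₀ ≠ 0 := (Finset.mem_filter.mp hi₀mem).2
    refine Finset.sum_pos' (fun d hd => ?_) ⟨s i₀, ?_, ?_⟩
    · have hd0 : 0 < d := (Finset.mem_Icc.mp hd).1
      exact mul_nonneg (hfpos d hd0).le (sq_nonneg _)
    · exact Finset.mem_Icc.mpr ⟨hs i₀, hsB i₀⟩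
    · have hsum : ∑ i ∈ Finset.univ.filter (fun i => s i₀ ∣ s i), x i = x i₀ := by
        refine Finset.sum_eq_single_of_mem i₀ ?_ ?_
        · exact Finset.mem_filter.mpr ⟨Finset.mem_univ _, dvd_refl _⟩
        · intro b hb hbne
          by_contra hxb
          have hdvd : s i₀ ∣ s b := (Finset.mem_filter.mp hb).2
          have hle : s i₀ ≤ s b := Nat.le_of_dvd (hs b) hdvd
          have hge : s b ≤ s i₀ :=
            hi₀max b (Finset.mem_filter.mpr ⟨Finset.mem_univ b, hxb⟩)
          exact hbne (hsinj (le_antisymm hge hle))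
      rw [hsum]
      exact mul_pos (hfpos _ (hs i₀)) (by positivity)
end

section
/- Let S = {s₁,…,sₙ} be any set of distinct positive integers and r > 0 a real number. Then the n×n matrix with entries gcd(s_i, s_j)^r is positive definite; in particular the GCD matrix is infinitely divisible. -/
open Finset Matrix

/-- The arithmetic function `n ↦ (n : ℝ) ^ r`. -/
noncomputable def gpowAF (r : ℝ) : ArithmeticFunction ℝ :=
  ⟨fun n => if n = 0 then 0 else (n : ℝ) ^ r, by simp⟩

lemma gpowAF_apply (r : ℝ) {n : ℕ} (hn : n ≠ 0) : gpowAF r n = (n : ℝ) ^ r := by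
  simp [gpowAF, hn]

lemma gpowAF_mult (r : ℝ) : (gpowAF r).IsMultiplicative := by
  refine ⟨by simp [gpowAF], fun {m n} _ => ?_⟩
  rcases eq_or_ne m 0 with rfl | hm
  · simp [gpowAF]
  rcases eq_or_ne n 0 with rfl | hn
  · simp [gpowAF]
  rw [gpowAF_apply r (Nat.mul_ne_zero hm hn), gpowAF_apply r hm, gpowAF_apply r hn,
    Nat.cast_mul, Real.mul_rpow (by positivity) (by positivity)]

/-- The Möbius transform of `n ↦ n ^ r`. -/
noncomputable def jordanAF (r : ℝ) : ArithmeticFunction ℝ :=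
  (ArithmeticFunction.moebius : ArithmeticFunction ℝ) * gpowAF r

lemma jordanAF_mult (r : ℝ) : (jordanAF r).IsMultiplicative :=
  (ArithmeticFunction.isMultiplicative_moebius.intCast).mul (gpowAF_mult r)

lemma sum_divisors_jordanAF (r : ℝ) {m : ℕ} (hm : m ≠ 0) :
    ∑ d ∈ m.divisors, jordanAF r d = (m : ℝ) ^ r := by
  have : ((jordanAF r) * ArithmeticFunction.zeta) m = (gpowAF r) m := by
    rw [jordanAF, mul_comm (ArithmeticFunction.moebius : ArithmeticFunction ℝ),
      mul_assoc, ArithmeticFunction.coe_moebius_mul_coe_zeta, mul_one]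
  rw [ArithmeticFunction.coe_mul_zeta_apply] at this
  rw [this, gpowAF_apply r hm]

lemma jordanAF_prime_pow_pos {r : ℝ} (hr : 0 < r) {p k : ℕ} (hp : p.Prime) (hk : k ≠ 0) :
    0 < jordanAF r (p ^ k) := by
  have hp1 : (1 : ℝ) < p := by exact_mod_cast hp.one_lt
  have hp0 : (0 : ℝ) ≤ p := by positivity
  have hval : jordanAF r (p ^ k) =
      ((p : ℝ) ^ (k : ℕ)) ^ r - ((p : ℝ) ^ (k - 1 : ℕ)) ^ r := by
    rw [jordanAF, ArithmeticFunction.mul_apply,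
      Nat.sum_divisorsAntidiagonal
        (fun i j => ((ArithmeticFunction.moebius : ArithmeticFunction ℝ) i)
          * gpowAF r j),
      Nat.sum_divisors_prime_pow hp]
    have hsub : ({0, 1} : Finset ℕ) ⊆ Finset.range (k + 1) := by
      intro x hx
      simp only [Finset.mem_insert, Finset.mem_singleton] at hx
      rcases hx with rfl | rfl <;> simp only [Finset.mem_range] <;> omega
    rw [← Finset.sum_subset hsub ?_]
    · rw [Finset.sum_pair (by norm_num)]
      have h0 : ((ArithmeticFunction.moebius : ArithmeticFunction ℝ) (p ^ 0)) = 1 := by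
        simp
      have h1 : ((ArithmeticFunction.moebius : ArithmeticFunction ℝ) (p ^ 1)) = -1 := by
        simp [ArithmeticFunction.moebius_apply_prime hp]
      have e0 : p ^ k / p ^ 0 = p ^ k := by simp
      have e1 : p ^ k / p ^ 1 = p ^ (k - 1) := by
        rw [Nat.pow_div (Nat.one_le_iff_ne_zero.2 hk) hp.pos]
      rw [h0, h1, e0, e1, gpowAF_apply r (pow_ne_zero _ hp.pos.ne'),
        gpowAF_apply r (pow_ne_zero _ hp.pos.ne')]
      push_cast
      ring
    · intro x hx hx'
      simp only [Finset.mem_insert, Finset.mem_singleton, not_or] at hx'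
      have hx2 : 2 ≤ x := by omega
      have : ((ArithmeticFunction.moebius : ArithmeticFunction ℝ) (p ^ x)) = 0 := by
        rw [ArithmeticFunction.intCoe_apply,
          ArithmeticFunction.moebius_apply_prime_pow hp (by omega)]
        simp [show x ≠ 1 by omega]
      rw [this, zero_mul]
  rw [hval, sub_pos, ← Real.rpow_natCast (p : ℝ) k, ← Real.rpow_natCast (p : ℝ) (k - 1),
    ← Real.rpow_mul hp0, ← Real.rpow_mul hp0, Real.rpow_lt_rpow_left_iff hp1]
  have : ((k : ℝ) - 1) < (k : ℝ) := by linarith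
  have hcast : ((k - 1 : ℕ) : ℝ) = (k : ℝ) - 1 := by
    rw [Nat.cast_sub (Nat.one_le_iff_ne_zero.2 hk)]; simp
  rw [hcast]
  exact mul_lt_mul_of_pos_right this hr

lemma jordanAF_pos {r : ℝ} (hr : 0 < r) {d : ℕ} (hd : d ≠ 0) : 0 < jordanAF r d := by
  rw [ArithmeticFunction.IsMultiplicative.multiplicative_factorization _
    (jordanAF_mult r) hd]
  refine Finset.prod_pos ?_
  intro p hp
  exact jordanAF_prime_pow_pos hr (Nat.prime_of_mem_primeFactors (by
    rwa [Nat.support_factorization] at hp))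
    (Finsupp.mem_support_iff.mp hp)

theorem gcd_matrix_rpow_posDef (n : ℕ) (s : Fin n → ℕ) (r : ℝ) (hr : 0 < r)
    (hs : ∀ i, 0 < s i) (hsinj : Function.Injective s) :
    (Matrix.of fun i j : Fin n => (Nat.gcd (s i) (s j) : ℝ) ^ r).PosDef := by
  classical
  set f : ℕ → ℝ := fun d => jordanAF r d with hf
  set D : Finset ℕ := Finset.univ.biUnion (fun i => (s i).divisors) with hD
  -- pointwise identity
  have key : ∀ i j : Fin n, (Nat.gcd (s i) (s j) : ℝ) ^ r =
      ∑ d ∈ D, if d ∣ s i ∧ d ∣ s j then f d else 0 := by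
    intro i j
    have hg : Nat.gcd (s i) (s j) ≠ 0 := Nat.gcd_ne_zero_left (hs i).ne'
    rw [← sum_divisors_jordanAF r hg, ← Finset.sum_filter]
    refine Finset.sum_congr ?_ (fun _ _ => rfl)
    ext d
    simp only [Nat.mem_divisors, Finset.mem_filter, hD, Finset.mem_biUnion, Finset.mem_univ,
      true_and, Nat.dvd_gcd_iff]
    constructor
    · rintro ⟨⟨h1, h2⟩, -⟩
      exact ⟨⟨i, ⟨h1, (hs i).ne'⟩⟩, h1, h2⟩
    · rintro ⟨-, h1, h2⟩
      exact ⟨⟨h1, h2⟩, hg⟩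
  rw [Matrix.posDef_iff_dotProduct_mulVec]
  constructor
  · ext i j
    simp only [Matrix.conjTranspose_apply, Matrix.of_apply, star_trivial, Nat.gcd_comm]
  · intro x hx
    have expand : dotProduct (star x)
        ((Matrix.of fun i j : Fin n => (Nat.gcd (s i) (s j) : ℝ) ^ r) *ᵥ x) =
        ∑ d ∈ D, f d * (∑ i, if d ∣ s i then x i else 0) ^ 2 := by
      simp only [dotProduct, Matrix.mulVec, dotProduct, Matrix.of_apply,
        star_trivial, Pi.star_apply]
      calc ∑ i, x i * ∑ j, (Nat.gcd (s i) (s j) : ℝ) ^ r * x j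
          = ∑ i, ∑ j, ∑ d ∈ D,
              (if d ∣ s i then x i else 0) * ((if d ∣ s j then x j else 0) * f d) := by
            refine Finset.sum_congr rfl fun i _ => ?_
            rw [Finset.mul_sum]
            refine Finset.sum_congr rfl fun j _ => ?_
            rw [key i j, Finset.sum_mul, Finset.mul_sum]
            refine Finset.sum_congr rfl fun d _ => ?_
            by_cases hP : d ∣ s i <;> by_cases hQ : d ∣ s j <;>
              simp only [hP, hQ, and_self, true_and, and_true, if_true, if_false,
                and_false, false_and, ite_true, ite_false] <;> ring
        _ = ∑ i, ∑ d ∈ D, ∑ j,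
              (if d ∣ s i then x i else 0) * ((if d ∣ s j then x j else 0) * f d) :=
            Finset.sum_congr rfl fun i _ => Finset.sum_comm
        _ = ∑ d ∈ D, ∑ i, ∑ j,
              (if d ∣ s i then x i else 0) * ((if d ∣ s j then x j else 0) * f d) :=
            Finset.sum_comm
        _ = ∑ d ∈ D, f d * (∑ i, if d ∣ s i then x i else 0) ^ 2 := by
            refine Finset.sum_congr rfl fun d _ => ?_
            have hsq : (∑ i, if d ∣ s i then x i else 0) ^ 2 =
                ∑ i, ∑ j, (if d ∣ s i then x i else 0) * (if d ∣ s j then x j else 0) := by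
              rw [sq, Finset.sum_mul_sum]
            rw [hsq, Finset.mul_sum]
            refine Finset.sum_congr rfl fun i _ => ?_
            rw [Finset.mul_sum]
            refine Finset.sum_congr rfl fun j _ => ?_
            ring
    rw [expand]
    -- choose i₀ with x i₀ ≠ 0 and s i₀ maximal
    have hTne : (Finset.univ.filter (fun i => x i ≠ 0)).Nonempty := by
      obtain ⟨i, hi⟩ := Function.ne_iff.mp hx
      exact ⟨i, Finset.mem_filter.2 ⟨Finset.mem_univ i, by simpa using hi⟩⟩
    obtain ⟨i₀, hi₀mem, hi₀max⟩ := Finset.exists_max_image _ s hTne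
    have hxi₀ : x i₀ ≠ 0 := (Finset.mem_filter.mp hi₀mem).2
    have hd₀D : s i₀ ∈ D := by
      simp only [hD, Finset.mem_biUnion, Finset.mem_univ, true_and]
      exact ⟨i₀, Nat.mem_divisors.2 ⟨dvd_rfl, (hs i₀).ne'⟩⟩
    have hinner : (∑ i, if s i₀ ∣ s i then x i else 0) = x i₀ := by
      have : ∀ i : Fin n, (if s i₀ ∣ s i then x i else 0) = if i = i₀ then x i₀ else 0 := by
        intro i
        rcases eq_or_ne i i₀ with rfl | hne
        · simp
        · rw [if_neg hne]
          split_ifs with hdvd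
          · by_contra hxi
            have hxi' : x i ≠ 0 := hxi
            have hle : s i ≤ s i₀ := hi₀max i (by simp [hxi'])
            have hge : s i₀ ≤ s i := Nat.le_of_dvd (hs i) hdvd
            exact hne (hsinj (le_antisymm hge hle).symm)
          · rfl
      rw [Finset.sum_congr rfl (fun i _ => this i), Finset.sum_ite_eq' Finset.univ i₀]
      simp
    have hpos : ∀ d ∈ D, 0 ≤ f d * (∑ i, if d ∣ s i then x i else 0) ^ 2 := by
      intro d hd
      have hd0 : d ≠ 0 := by
        simp only [hD, Finset.mem_biUnion] at hd
        obtain ⟨i, -, hi⟩ := hd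
        exact fun h => by simp [h, (hs i).ne'] at hi
      exact mul_nonneg (jordanAF_pos hr hd0).le (sq_nonneg _)
    refine Finset.sum_pos' hpos ⟨s i₀, hd₀D, ?_⟩
    rw [hinner]
    exact mul_pos (jordanAF_pos hr (hs i₀).ne') (by positivity)
end

section
/- Let S = {s₁,…,sₙ} be a GCD-closed set of distinct positive integers (gcd(s_i,s_j) ∈ S for all i,j), and define the generalized Euler totient Ψ_S on S inductively by Ψ_S(s_j) = s_j − ∑_{s_i ∣ s_j, s_i ≠ s_j, s_i ∈ S} Ψ_S(s_i). Then the determinant of the GCD matrix (gcd(s_i,s_j)) equals ∏_{i=1}^{n} Ψ_S(s_i). -/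
theorem gcd_matrix_det_gcd_closed (n : ℕ) (s : Fin n → ℕ)
    (hs : ∀ i, 0 < s i) (hsinj : Function.Injective s)
    (hgc : ∀ i j, ∃ k, s k = Nat.gcd (s i) (s j))
    (Psi : Fin n → ℝ)
    (hPsi : ∀ j, Psi j = (s j : ℝ)
      - ∑ i ∈ Finset.univ.filter (fun i => s i ∣ s j ∧ s i ≠ s j), Psi i) :
    (Matrix.of fun i j : Fin n => (Nat.gcd (s i) (s j) : ℝ)).det = ∏ i, Psi i := by
  classical
  set L : Matrix (Fin n) (Fin n) ℝ := fun i k => if s k ∣ s i then 1 else 0 with hL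
  -- key summation lemma
  have hsum : ∀ j, ∑ k ∈ Finset.univ.filter (fun k => s k ∣ s j), Psi k = s j := by
    intro j
    have hj : j ∈ Finset.univ.filter (fun k => s k ∣ s j) := by simp
    rw [← Finset.add_sum_erase _ _ hj]
    have he : (Finset.univ.filter (fun k => s k ∣ s j)).erase j
        = Finset.univ.filter (fun i => s i ∣ s j ∧ s i ≠ s j) := by
      ext k
      simp only [Finset.mem_erase, Finset.mem_filter, Finset.mem_univ, true_and]
      constructor
      · rintro ⟨hk, hd⟩
        exact ⟨hd, fun h => hk (hsinj h)⟩
      · rintro ⟨hd, hne⟩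
        exact ⟨fun h => hne (by rw [h]), hd⟩
    rw [he, hPsi j]; ring
  -- factorization A = L * D * L.transpose
  have hA : (Matrix.of fun i j : Fin n => (Nat.gcd (s i) (s j) : ℝ))
      = L * Matrix.diagonal Psi * L.transpose := by
    ext i j
    obtain ⟨m, hm⟩ := hgc i j
    have : ∀ k, s k ∣ s i ∧ s k ∣ s j ↔ s k ∣ s m := by
      intro k; rw [hm, Nat.dvd_gcd_iff]
    simp only [Matrix.mul_apply, Matrix.diagonal_apply, Matrix.transpose_apply,
      Matrix.of_apply]
    have hentry : ∀ k, (∑ l, L i l * (if l = k then Psi l else 0)) * L j k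
        = if s k ∣ s m then Psi k else 0 := by
      intro k
      rw [Finset.sum_eq_single k (by intro b _ hb; simp [hb]) (by simp)]
      simp only [if_pos rfl, hL]
      by_cases h1 : s k ∣ s i
      · by_cases h2 : s k ∣ s j
        · simp [h1, h2, if_pos ((this k).mp ⟨h1, h2⟩)]
        · have hnm : ¬ s k ∣ s m := fun h => h2 ((this k).mpr h).2
          simp [h1, h2, if_neg hnm]
      · have hnm : ¬ s k ∣ s m := fun h => h1 ((this k).mpr h).1
        simp [h1, if_neg hnm]
    symm
    calc ∑ k, (∑ l, L i l * (if l = k then Psi l else 0)) * L j k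
        = ∑ k, if s k ∣ s m then Psi k else 0 :=
          Finset.sum_congr rfl fun k _ => hentry k
      _ = ∑ k ∈ Finset.univ.filter (fun k => s k ∣ s m), Psi k :=
          (Finset.sum_filter _ _).symm
      _ = ((s m : ℕ) : ℝ) := hsum m
      _ = ((Nat.gcd (s i) (s j) : ℕ) : ℝ) := by rw [hm]
  -- det L = 1
  have hdetL : L.det = 1 := by
    set σ := Tuple.sort s with hσ
    have hmono : StrictMono (s ∘ σ) :=
      (Tuple.monotone_sort s).strictMono_of_injective (hsinj.comp σ.injective)
    rw [← Matrix.det_submatrix_equiv_self σ L]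
    have ht : (L.submatrix σ σ).BlockTriangular OrderDual.toDual := by
      intro i j hij
      have hij' : (i : Fin n) < j := hij
      have : ¬ s (σ j) ∣ s (σ i) := by
        intro hd
        exact absurd (Nat.le_of_dvd (hs _) hd) (not_le.mpr (hmono hij'))
      simp [Matrix.submatrix, Matrix.submatrix_apply, hL, this]
    rw [Matrix.det_of_lowerTriangular _ ht]
    simp [Matrix.submatrix, Matrix.submatrix_apply, hL]
  rw [hA, Matrix.det_mul, Matrix.det_mul, Matrix.det_transpose, hdetL,
    Matrix.det_diagonal]
  ring
end

section
/- Let S = {s₁,…,sₙ} be a GCD-closed set of distinct positive integers with incidence matrix E (E_{ij} = 1 if s_j ∣ s_i, else 0) and let D be the diagonal matrix with entries Ψ_S(s_i). Then the GCD matrix (gcd(s_i, s_j)) equals E D Eᵀ. -/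
theorem gcd_matrix_factorization_gcd_closed (n : ℕ) (s : Fin n → ℕ)
    (hs : ∀ i, 0 < s i) (hsinj : Function.Injective s)
    (hgc : ∀ i j, ∃ k, s k = Nat.gcd (s i) (s j))
    (Psi : Fin n → ℝ)
    (hPsi : ∀ j, Psi j = (s j : ℝ)
      - ∑ i ∈ Finset.univ.filter (fun i => s i ∣ s j ∧ s i ≠ s j), Psi i)
    (E : Matrix (Fin n) (Fin n) ℝ)
    (hE : ∀ i j, E i j = if s j ∣ s i then 1 else 0) :
    (Matrix.of fun i j : Fin n => (Nat.gcd (s i) (s j) : ℝ))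
      = E * Matrix.diagonal Psi * E.transpose := by
  have key : ∀ j, ∑ k ∈ Finset.univ.filter (fun k => s k ∣ s j), Psi k = (s j : ℝ) := by
    intro j
    have hsplit : Finset.univ.filter (fun k => s k ∣ s j) =
        insert j (Finset.univ.filter (fun i => s i ∣ s j ∧ s i ≠ s j)) := by
      ext k
      simp only [Finset.mem_insert, Finset.mem_filter, Finset.mem_univ, true_and]
      constructor
      · intro hk
        by_cases h : k = j
        · exact Or.inl h
        · exact Or.inr ⟨hk, fun he => h (hsinj he)⟩
      · rintro (rfl | ⟨h, _⟩)
        · exact dvd_rfl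
        · exact h
    rw [hsplit, Finset.sum_insert (by simp)]
    rw [hPsi j]; ring
  ext i j
  obtain ⟨m, hm⟩ := hgc i j
  have hdvd : ∀ k, (s k ∣ s i ∧ s k ∣ s j) ↔ s k ∣ s m := by
    intro k; rw [hm, Nat.dvd_gcd_iff]
  have : (E * Matrix.diagonal Psi * E.transpose) i j
      = ∑ k, (if s k ∣ s i ∧ s k ∣ s j then Psi k else 0) := by
    simp only [Matrix.mul_apply, Matrix.mul_diagonal, Matrix.transpose_apply, hE]
    apply Finset.sum_congr rfl
    intro k _
    by_cases h1 : s k ∣ s i <;> by_cases h2 : s k ∣ s j <;>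
      simp [h1, h2, Matrix.diagonal_apply, Finset.sum_ite_eq', Finset.sum_ite_eq]
  rw [this, Matrix.of_apply, ← Finset.sum_filter]
  have hfilter : Finset.univ.filter (fun k => s k ∣ s i ∧ s k ∣ s j)
      = Finset.univ.filter (fun k => s k ∣ s m) := by
    apply Finset.filter_congr; intro k _; simp [hdvd k]
  rw [hfilter, key m, hm]
end

section
/- Let S = {s₁,…,sₙ} be distinct positive integers, F = {f₁,…,f_l} a factor-closed set containing S, and E ∈ ℝ^{n×l} the matrix with E_{ik} = 1 if f_k ∣ s_i and 0 otherwise. Then the columns of E span ℝⁿ, i.e., rank(E) = n. -/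
theorem incidence_matrix_full_rank (n l : ℕ) (s : Fin n → ℕ) (f : Fin l → ℕ)
    (hs : ∀ i, 0 < s i) (hsinj : Function.Injective s)
    (hf : ∀ k, 0 < f k) (hfinj : Function.Injective f)
    (hsub : ∀ i, ∃ k, f k = s i)
    (hfc : ∀ k d, 0 < d → d ∣ f k → ∃ k', f k' = d)
    (E : Matrix (Fin n) (Fin l) ℝ)
    (hE : ∀ i k, E i k = if f k ∣ s i then 1 else 0) :
    E.rank = n := by
  classical
  -- choose columns
  choose g hg using hsub
  -- the n×n submatrix
  set σ : Equiv.Perm (Fin n) := Tuple.sort s with hσ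
  have hmono : Monotone (s ∘ σ) := Tuple.monotone_sort s
  have hsm : StrictMono (s ∘ σ) := hmono.strictMono_of_injective (hsinj.comp σ.injective)
  set M : Matrix (Fin n) (Fin n) ℝ := E.submatrix σ (g ∘ σ) with hM
  have hMij : ∀ i j, M i j = if s (σ j) ∣ s (σ i) then 1 else 0 := by
    intro i j
    simp [hM, Matrix.submatrix_apply, hE, hg]
  have htri : M.BlockTriangular OrderDual.toDual := by
    intro i j hij
    have hij' : (i : Fin n) < j := hij
    rw [hMij]
    have : ¬ s (σ j) ∣ s (σ i) := by
      intro hdvd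
      exact absurd (Nat.le_of_dvd (hs _) hdvd) (not_le.mpr (hsm hij'))
    simp [this]
  have hdet : M.det = 1 := by
    rw [Matrix.det_of_lowerTriangular M htri]
    apply Finset.prod_eq_one
    intro i _
    rw [hMij]; simp
  have hunit : IsUnit M := by
    apply (Matrix.isUnit_iff_isUnit_det M).mpr
    rw [hdet]; exact isUnit_one
  have hrankM : M.rank = n := by
    rw [Matrix.rank_of_isUnit M hunit, Fintype.card_fin]
  have hle : M.rank ≤ E.rank := by
    set P : Matrix (Fin l) (Fin n) ℝ := fun k j => if k = g (σ j) then 1 else 0 with hP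
    have hEP : E * P = E.submatrix id (g ∘ σ) := by
      ext i j
      rw [Matrix.mul_apply]
      simp only [hP, mul_ite, mul_one, mul_zero]
      rw [Finset.sum_ite_eq' Finset.univ (g (σ j)) (fun k => E i k)]
      simp
    have h1 : M = (E.submatrix id (g ∘ σ)).submatrix σ (Equiv.refl (Fin n)) := by
      ext i j; simp [hM]
    calc M.rank = (E.submatrix id (g ∘ σ)).rank := by
          rw [h1, Matrix.rank_submatrix]
      _ = (E * P).rank := by rw [hEP]
      _ ≤ E.rank := Matrix.rank_mul_le_left E P
  have hge : E.rank ≤ n := E.rank_le_height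
  omega
end

section
/- Let S be a factor-closed set of n distinct positive integers. Then for every nonzero integer vector x ∈ ℤⁿ, the quadratic form ∑_{i,j} gcd(s_i, s_j) x_i x_j is a positive integer, and it can be written as ∑_{k=1}^{n} φ(s_k) (∑_{i : s_k ∣ s_i} x_i)². -/
open Finset

lemma gcd_eq_sum_totient (n : ℕ) (s : Fin n → ℕ)
    (hs : ∀ i, 0 < s i) (hsinj : Function.Injective s)
    (hfc : ∀ i d, 0 < d → d ∣ s i → ∃ j, s j = d) (i j : Fin n) :
    (Nat.gcd (s i) (s j) : ℤ)
      = ∑ k ∈ univ.filter (fun k => s k ∣ s i ∧ s k ∣ s j), (Nat.totient (s k) : ℤ) := by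
  have hg : 0 < Nat.gcd (s i) (s j) := Nat.gcd_pos_of_pos_left _ (hs i)
  have himg : (univ.filter (fun k => s k ∣ s i ∧ s k ∣ s j)).image s
      = (Nat.gcd (s i) (s j)).divisors := by
    ext d
    simp only [mem_image, mem_filter, mem_univ, true_and, Nat.mem_divisors]
    constructor
    · rintro ⟨k, ⟨h1, h2⟩, rfl⟩
      exact ⟨Nat.dvd_gcd h1 h2, hg.ne'⟩
    · rintro ⟨hd, -⟩
      have hd0 : 0 < d := Nat.pos_of_dvd_of_pos hd hg
      obtain ⟨k, rfl⟩ := hfc i d hd0 (hd.trans (Nat.gcd_dvd_left _ _))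
      exact ⟨k, ⟨hd.trans (Nat.gcd_dvd_left _ _), hd.trans (Nat.gcd_dvd_right _ _)⟩, rfl⟩
  have := Nat.sum_totient (Nat.gcd (s i) (s j))
  rw [← himg, Finset.sum_image (fun a _ b _ h => hsinj h)] at this
  rw [← this]
  push_cast
  rfl

theorem gcd_quadratic_form_factor_closed (n : ℕ) (s : Fin n → ℕ)
    (hs : ∀ i, 0 < s i) (hsinj : Function.Injective s)
    (hfc : ∀ i d, 0 < d → d ∣ s i → ∃ j, s j = d)
    (x : Fin n → ℤ) (hx : x ≠ 0) :
    0 < ∑ i, ∑ j, (Nat.gcd (s i) (s j) : ℤ) * x i * x j ∧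
    ∑ i, ∑ j, (Nat.gcd (s i) (s j) : ℤ) * x i * x j
      = ∑ k, (Nat.totient (s k) : ℤ)
          * (∑ i ∈ Finset.univ.filter (fun i => s k ∣ s i), x i) ^ 2 := by
  have key : ∑ i, ∑ j, (Nat.gcd (s i) (s j) : ℤ) * x i * x j
      = ∑ k, (Nat.totient (s k) : ℤ)
          * (∑ i ∈ Finset.univ.filter (fun i => s k ∣ s i), x i) ^ 2 := by
    have step1 : ∀ i j, (Nat.gcd (s i) (s j) : ℤ) * x i * x j
        = ∑ k, (if s k ∣ s i then (1:ℤ) else 0) * (if s k ∣ s j then (1:ℤ) else 0)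
            * (Nat.totient (s k) : ℤ) * x i * x j := by
      intro i j
      rw [gcd_eq_sum_totient n s hs hsinj hfc i j, Finset.sum_filter,
        Finset.sum_mul, Finset.sum_mul]
      refine Finset.sum_congr rfl fun k _ => ?_
      by_cases h1 : s k ∣ s i <;> by_cases h2 : s k ∣ s j <;> simp [h1, h2]
    have hk : ∀ k : Fin n, (Nat.totient (s k) : ℤ)
          * (∑ i ∈ Finset.univ.filter (fun i => s k ∣ s i), x i) ^ 2
        = ∑ i, ∑ j, (if s k ∣ s i then (1:ℤ) else 0) * (if s k ∣ s j then (1:ℤ) else 0)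
            * (Nat.totient (s k) : ℤ) * x i * x j := by
      intro k
      rw [sq, Finset.sum_filter, Finset.sum_mul_sum, Finset.mul_sum]
      refine Finset.sum_congr rfl fun i _ => ?_
      rw [Finset.mul_sum]
      refine Finset.sum_congr rfl fun j _ => ?_
      by_cases h1 : s k ∣ s i <;> by_cases h2 : s k ∣ s j <;> simp [h1, h2] <;> ring
    calc ∑ i, ∑ j, (Nat.gcd (s i) (s j) : ℤ) * x i * x j
        = ∑ i, ∑ j, ∑ k, (if s k ∣ s i then (1:ℤ) else 0) * (if s k ∣ s j then (1:ℤ) else 0)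
            * (Nat.totient (s k) : ℤ) * x i * x j := by
          exact Finset.sum_congr rfl fun i _ => Finset.sum_congr rfl fun j _ => step1 i j
      _ = ∑ i, ∑ k, ∑ j, (if s k ∣ s i then (1:ℤ) else 0) * (if s k ∣ s j then (1:ℤ) else 0)
            * (Nat.totient (s k) : ℤ) * x i * x j :=
          Finset.sum_congr rfl fun i _ => Finset.sum_comm
      _ = ∑ k, ∑ i, ∑ j, (if s k ∣ s i then (1:ℤ) else 0) * (if s k ∣ s j then (1:ℤ) else 0)
            * (Nat.totient (s k) : ℤ) * x i * x j := Finset.sum_comm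
      _ = ∑ k, (Nat.totient (s k) : ℤ)
          * (∑ i ∈ Finset.univ.filter (fun i => s k ∣ s i), x i) ^ 2 :=
          Finset.sum_congr rfl fun k _ => (hk k).symm
  refine ⟨?_, key⟩
  rw [key]
  have hne : (univ.filter (fun i => x i ≠ 0)).Nonempty := by
    have : ∃ i, x i ≠ 0 := by
      by_contra h; push_neg at h; exact hx (funext h)
    obtain ⟨i, hi⟩ := this
    exact ⟨i, by simp [hi]⟩
  obtain ⟨i₀, hi₀mem, hi₀max⟩ := Finset.exists_max_image _ s hne
  simp only [mem_filter, mem_univ, true_and] at hi₀mem hi₀max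
  have hsum : ∑ i ∈ univ.filter (fun i => s i₀ ∣ s i), x i = x i₀ := by
    apply Finset.sum_eq_single_of_mem i₀ (by simp)
    intro j hj hji
    simp only [mem_filter, mem_univ, true_and] at hj
    by_contra hxj
    have h1 : s j ≤ s i₀ := hi₀max j hxj
    have h2 : s i₀ ≤ s j := Nat.le_of_dvd (hs j) hj
    exact hji (hsinj (le_antisymm h1 h2))
  apply Finset.sum_pos' (fun k _ => by positivity)
  refine ⟨i₀, mem_univ _, ?_⟩
  rw [hsum]
  have h1 : (0:ℤ) < (Nat.totient (s i₀) : ℤ) := by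
    exact_mod_cast (Nat.totient_pos).2 (hs i₀)
  have h2 : (0:ℤ) < x i₀ ^ 2 := by positivity
  positivity
end

section
/- Let (U, ≤) be a meet-semilattice, S = {s₁,…,sₙ} a finite meet-closed subset (s_i ⊓ s_j ∈ S for all i,j), and g : U → ℝ any function. Define Ψ on S inductively by Ψ(s_j) = g(s_j) − ∑_{s_i < s_j, s_i ∈ S} Ψ(s_i). Then det(g(s_i ⊓ s_j))_{i,j=1}^{n} = ∏_{i=1}^{n} Ψ(s_i). -/
open scoped Classical in
theorem meet_matrix_det {U : Type*} [SemilatticeInf U]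
    (n : ℕ) (s : Fin n → U) (hsinj : Function.Injective s)
    (hmc : ∀ i j, ∃ k, s k = s i ⊓ s j)
    (g : U → ℝ) (Psi : Fin n → ℝ)
    (hPsi : ∀ j, Psi j = g (s j)
      - ∑ i ∈ Finset.univ.filter (fun i => s i < s j), Psi i) :
    (Matrix.of fun i j : Fin n => g (s i ⊓ s j)).det = ∏ i, Psi i := by
  classical
  -- cumulative form of hPsi
  have hg : ∀ j, g (s j) = ∑ k ∈ Finset.univ.filter (fun k => s k ≤ s j), Psi k := by
    intro j
    have hset : Finset.univ.filter (fun k => s k ≤ s j)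
        = insert j (Finset.univ.filter (fun k => s k < s j)) := by
      ext k
      simp only [Finset.mem_filter, Finset.mem_univ, true_and, Finset.mem_insert]
      constructor
      · intro h
        rcases eq_or_lt_of_le h with h' | h'
        · exact Or.inl (hsinj h')
        · exact Or.inr h'
      · rintro (rfl | h)
        · exact le_rfl
        · exact h.le
    rw [hset, Finset.sum_insert (by simp), hPsi j]
    ring
  set B : Matrix (Fin n) (Fin n) ℝ :=
    Matrix.of (fun i k => if s k ≤ s i then 1 else 0) with hB
  have hfact : (Matrix.of fun i j : Fin n => g (s i ⊓ s j))
      = B * (Matrix.diagonal Psi * B.transpose) := by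
    ext i j
    obtain ⟨m, hm⟩ := hmc i j
    have : (B * (Matrix.diagonal Psi * B.transpose)) i j
        = ∑ k, (if s k ≤ s i then (1:ℝ) else 0) * (Psi k * (if s k ≤ s j then 1 else 0)) := by
      rw [Matrix.mul_apply]
      apply Finset.sum_congr rfl
      intro k _
      rw [Matrix.diagonal_mul, Matrix.transpose_apply]
      rfl
    rw [Matrix.of_apply, this, ← hm, hg m]
    rw [Finset.sum_filter]
    apply Finset.sum_congr rfl
    intro k _
    have : s k ≤ s m ↔ s k ≤ s i ∧ s k ≤ s j := by
      rw [hm]; exact le_inf_iff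
    by_cases h1 : s k ≤ s i <;> by_cases h2 : s k ≤ s j <;>
      simp [h1, h2, this]
  -- det B = 1 via sorting
  have hdetB : B.det = 1 := by
    set f : Fin n → ℕ := fun i => (Finset.univ.filter (fun k => s k ≤ s i)).card with hf
    set σ := Tuple.sort f with hσ
    have hmono := Tuple.monotone_sort f
    have hstrict : ∀ a b : Fin n, s (σ a) < s (σ b) → ¬ b ≤ a := by
      intro a b hab hba
      have hsub : Finset.univ.filter (fun k => s k ≤ s (σ a))
          ⊂ Finset.univ.filter (fun k => s k ≤ s (σ b)) := by
        constructor
        · intro k hk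
          simp only [Finset.mem_filter, Finset.mem_univ, true_and] at hk ⊢
          exact hk.trans hab.le
        · intro hcon
          have : σ b ∈ Finset.univ.filter (fun k => s k ≤ s (σ a)) :=
            hcon (by simp)
          simp only [Finset.mem_filter, Finset.mem_univ, true_and] at this
          exact absurd (lt_of_le_of_lt this hab) (lt_irrefl _)
      have hcard : f (σ a) < f (σ b) := Finset.card_lt_card hsub
      have := hmono hba
      simp only [Function.comp_apply, ← hσ] at this
      omega
    have hsub : (B.submatrix σ σ).det = B.det := Matrix.det_submatrix_equiv_self σ B
    rw [← hsub]
    rw [Matrix.det_of_lowerTriangular (B.submatrix σ σ)]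
    · apply Finset.prod_eq_one
      intro a _
      simp [hB, Matrix.submatrix_apply]
    · intro a b hlt
      rw [OrderDual.toDual_lt_toDual] at hlt
      simp only [Matrix.submatrix_apply, hB, Matrix.of_apply, ite_eq_right_iff]
      intro hle
      rcases eq_or_lt_of_le hle with h' | h'
      · exact absurd (σ.injective (hsinj h')) (fun h => by omega)
      · exact absurd hlt.le (hstrict b a h')
  rw [hfact, Matrix.det_mul, Matrix.det_mul, hdetB, Matrix.det_transpose, hdetB,
    Matrix.det_diagonal]
  ring
end

section
/- Let (U, ≤) be a meet-semilattice, S = {s₁,…,sₙ} a finite meet-closed subset with s₁,…,sₙ ordered so that s_j ≤ s_i implies j ≤ i, and g : U → ℝ. Let E be the n×n matrix with E_{ij} = 1 if s_j ≤ s_i and 0 otherwise, and D the diagonal matrix with entries Ψ(s_i), where Ψ(s_j) = g(s_j) − ∑_{s_i < s_j} Ψ(s_i). Then (g(s_i ⊓ s_j)) = E D Eᵀ and E is unitriangular. -/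
open scoped Classical in
theorem meet_matrix_structure {U : Type*} [SemilatticeInf U]
    (n : ℕ) (s : Fin n → U) (hsinj : Function.Injective s)
    (hmc : ∀ i j, ∃ k, s k = s i ⊓ s j)
    (hord : ∀ i j, s j ≤ s i → j ≤ i)
    (g : U → ℝ) (Psi : Fin n → ℝ)
    (hPsi : ∀ j, Psi j = g (s j)
      - ∑ i ∈ Finset.univ.filter (fun i => s i < s j), Psi i)
    (E : Matrix (Fin n) (Fin n) ℝ)
    (hE : ∀ i j, E i j = if s j ≤ s i then 1 else 0) :
    (Matrix.of fun i j : Fin n => g (s i ⊓ s j))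
        = E * Matrix.diagonal Psi * E.transpose ∧
    (∀ i, E i i = 1) ∧ (∀ i j : Fin n, i < j → E i j = 0) := by
  have key : ∀ j, g (s j) = ∑ k ∈ Finset.univ.filter (fun k => s k ≤ s j), Psi k := by
    intro j
    have hset : Finset.univ.filter (fun k => s k ≤ s j)
        = insert j (Finset.univ.filter (fun k => s k < s j)) := by
      ext k
      simp only [Finset.mem_filter, Finset.mem_univ, true_and, Finset.mem_insert]
      constructor
      · intro h
        rcases eq_or_ne k j with rfl | hne
        · exact Or.inl rfl
        · exact Or.inr (lt_of_le_of_ne h (fun he => hne (hsinj he)))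
      · rintro (rfl | h)
        · exact le_rfl
        · exact h.le
    rw [hset, Finset.sum_insert (by simp), hPsi j]
    ring
  refine ⟨?_, fun i => by simp [hE], fun i j hij => ?_⟩
  · ext i j
    obtain ⟨k, hk⟩ := hmc i j
    have h1 : (E * Matrix.diagonal Psi * E.transpose) i j
        = ∑ l, E i l * Psi l * E j l := by
      simp only [Matrix.mul_apply, Matrix.transpose_apply, Matrix.diagonal_apply,
        mul_ite, mul_zero, ite_mul, zero_mul, Finset.sum_ite_eq, Finset.sum_ite_eq',
        Finset.mem_univ, if_true]
    have h2 : ∀ l, E i l * Psi l * E j l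
        = if s l ≤ s k then Psi l else 0 := by
      intro l
      rw [hE, hE]
      have : s l ≤ s k ↔ s l ≤ s i ∧ s l ≤ s j := by rw [hk, le_inf_iff]
      by_cases h1 : s l ≤ s i <;> by_cases h2 : s l ≤ s j <;>
        simp [h1, h2, this]
    rw [Matrix.of_apply, h1, Finset.sum_congr rfl fun l _ => h2 l, ← Finset.sum_filter,
      ← key k, hk]
  · rw [hE]
    have : ¬ s j ≤ s i := fun h => absurd (hord i j h) (not_le.mpr hij)
    simp [this]
end
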